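/- Let T be a finite tree with independence number t, and let c_k = i_k(T) denote the coefficients of its independence polynomial. Then c_{⌈(2t−1)/3⌉} ≥ c_{⌈(2t−1)/3⌉+1} ≥ ... ≥ c_{t−1} ≥ c_t; that is, the last one-third of the coefficients of the independence polynomial of a tree are weakly decreasing. -/

import Mathlib

/-- The number of independent sets of size `k` in a finite simple graph `G`
(an independent set is a finite set of pairwise nonadjacent vertices). -/
noncomputable def indepCount {V : Type} [Fintype V] (G : SimpleGraph V) (k : ℕ) : ℕ :=
  Nat.card {s : Finset V // s.card = k ∧ ∀ u ∈ s, ∀ v ∈ s, ¬ G.Adj u v}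

/-- The independence number of a finite simple graph `G`: the maximum size of an
independent set. -/
noncomputable def indepNum {V : Type} [Fintype V] (G : SimpleGraph V) : ℕ :=
  sSup {k | ∃ s : Finset V, s.card = k ∧ ∀ u ∈ s, ∀ v ∈ s, ¬ G.Adj u v}

open Finset

section Aux

variable {V : Type} {T : SimpleGraph V}

/-- A tree is 2-colorable. -/
lemma tree_exists_coloring (hT : T.IsTree) :
    ∃ col : V → Bool, ∀ u v, T.Adj u v → col u ≠ col v := by
  classical
  obtain ⟨r⟩ := hT.isConnected.nonempty
  have hup := hT.existsUnique_path
  set P : ∀ v, T.Walk r v := fun v => (hup r v).choose with hPdef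
  have hP : ∀ v, (P v).IsPath := fun v => (hup r v).choose_spec.1
  have hPu : ∀ v (q : T.Walk r v), q.IsPath → q = P v :=
    fun v q hq => (hup r v).choose_spec.2 q hq
  have key : ∀ u v, T.Adj u v →
      (P v).length = (P u).length + 1 ∨ (P u).length = (P v).length + 1 := by
    intro u v huv
    by_cases hv : v ∈ (P u).support
    · right
      have hq : ((P u).takeUntil v hv).IsPath := (hP u).takeUntil hv
      have hd : ((P u).dropUntil v hv).IsPath := (hP u).dropUntil hv
      -- the drop part is a path from v to u; so is the single edge
      have he : (SimpleGraph.Walk.cons huv.symm SimpleGraph.Walk.nil : T.Walk v u).IsPath := by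
        rw [SimpleGraph.Walk.cons_isPath_iff]
        simp [huv.ne']
      have hdq : ((P u).dropUntil v hv) = SimpleGraph.Walk.cons huv.symm SimpleGraph.Walk.nil := by
        have := hT.IsAcyclic.path_unique ⟨(P u).dropUntil v hv, hd⟩
          ⟨SimpleGraph.Walk.cons huv.symm SimpleGraph.Walk.nil, he⟩
        exact congrArg Subtype.val this
    -- the take part is the unique path to v
      have hPv : (P u).takeUntil v hv = P v := hPu v _ hq
      have hsp := congrArg SimpleGraph.Walk.length ((P u).take_spec hv)
      rw [SimpleGraph.Walk.length_append, hdq, hPv] at hsp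
      simp at hsp
      omega
    · left
      have hcp : ((P u).concat huv).IsPath := by
        rw [← SimpleGraph.Walk.isPath_reverse_iff, SimpleGraph.Walk.reverse_concat,
          SimpleGraph.Walk.cons_isPath_iff]
        refine ⟨(hP u).reverse, ?_⟩
        rwa [SimpleGraph.Walk.support_reverse, List.mem_reverse]
      have : ((P u).concat huv) = P v := hPu v _ hcp
      rw [← this, SimpleGraph.Walk.length_concat]
  refine ⟨fun v => decide ((P v).length % 2 = 1), ?_⟩
  intro u v huv h
  rcases key u v huv with h1 | h1 <;>
  · simp only [decide_eq_decide] at h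
    omega

end Aux

/-- For a finite tree `T` with independence number `t` and independence polynomial
coefficients `c_k = i_k(T)`, the last one-third of the coefficients are weakly
decreasing: `c_{⌈(2t-1)/3⌉} ≥ ⋯ ≥ c_{t-1} ≥ c_t`.  (Note that for `t ≥ 1` one has
`⌈(2t-1)/3⌉ = (2t+1)/3` with natural-number division.) -/
theorem tree_indepCount_decreasing_last_third {V : Type} [Fintype V]
    (T : SimpleGraph V) (hT : T.IsTree) :
    ∀ j : ℕ, (2 * indepNum T + 1) / 3 ≤ j → j < indepNum T →
      indepCount T (j + 1) ≤ indepCount T j := by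
  classical
  obtain ⟨col, hcol⟩ := tree_exists_coloring hT
  intro j hj1 _hj2
  -- arithmetic: 2 * t ≤ 3 * j + 1
  have harith : 2 * indepNum T ≤ 3 * j + 1 := by omega
  -- independent-set predicate and counting finsets
  set Indep : Finset V → Prop := fun s => ∀ u ∈ s, ∀ v ∈ s, ¬ T.Adj u v with hIndepDef
  set Ind : ℕ → Finset (Finset V) :=
    fun k => Finset.univ.filter (fun s => s.card = k ∧ Indep s) with hIndDef
  have hcount : ∀ k, indepCount T k = (Ind k).card := by
    intro k
    rw [indepCount, Nat.card_eq_fintype_card, hIndDef]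
    convert Fintype.card_subtype (p := fun s : Finset V => s.card = k ∧ Indep s) using 2
  -- every independent set has size at most indepNum T
  have hle : ∀ s : Finset V, Indep s → s.card ≤ indepNum T := by
    intro s hs
    apply le_csSup
    · refine ⟨Fintype.card V, ?_⟩
      rintro k ⟨s, rfl, -⟩
      exact s.card_le_univ
    · exact ⟨s, rfl, hs⟩
  -- the extension set of an independent set
  set E : Finset V → Finset V :=
    fun B => Finset.univ.filter (fun v => v ∉ B ∧ Indep (insert v B)) with hEdef
  -- key bound: extensions of a size-j independent set number at most j+1
  have hE : ∀ B ∈ Ind j, (E B).card ≤ j + 1 := by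
    intro B hB
    have hB' : B.card = j ∧ Indep B := by
      have := (mem_filter.mp hB).2
      exact this
    obtain ⟨hBcard, hBind⟩ := hB'
    have hclass : ∀ (b : Bool), ((E B).filter (fun v => col v = b)).card + j ≤ indepNum T := by
      intro b
      set Eb := (E B).filter (fun v => col v = b) with hEb
      have hEbE : ∀ v ∈ Eb, v ∉ B ∧ Indep (insert v B) ∧ col v = b := by
        intro v hv
        rw [hEb, mem_filter, hEdef, mem_filter] at hv
        exact ⟨hv.1.2.1, hv.1.2.2, hv.2⟩
      have hdisj : Disjoint B Eb := by
        rw [Finset.disjoint_right]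
        intro v hv
        exact (hEbE v hv).1
      have hunion : Indep (B ∪ Eb) := by
        intro u hu v hv
        rw [mem_union] at hu hv
        rcases hu with hu | hu <;> rcases hv with hv | hv
        · exact hBind u hu v hv
        · exact (hEbE v hv).2.1 u (mem_insert_of_mem hu) v (mem_insert_self _ _)
        · exact (hEbE u hu).2.1 u (mem_insert_self _ _) v (mem_insert_of_mem hv)
        · intro hadj
          exact hcol u v hadj (((hEbE u hu).2.2).trans ((hEbE v hv).2.2).symm)
      have := hle _ hunion
      rwa [card_union_of_disjoint hdisj, hBcard, add_comm] at this
    have hsplit : ((E B).filter (fun v => col v = true)).card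
        + ((E B).filter (fun v => col v = false)).card = (E B).card := by
      have := Finset.card_filter_add_card_filter_not (s := E B)
        (p := fun v => col v = true)
      simpa [Bool.not_eq_true] using this
    have h0 := hclass true
    have h1 := hclass false
    omega
  -- double counting via an injection of sigma types
  set S₁ : Finset ((_ : Finset V) × V) := (Ind (j+1)).sigma (fun A => A) with hS₁
  set S₂ : Finset ((_ : Finset V) × V) := (Ind j).sigma (fun B => E B) with hS₂
  have hinj : S₁.card ≤ S₂.card := by
    apply Finset.card_le_card_of_injOn (fun x => ⟨x.1.erase x.2, x.2⟩)
    · rintro ⟨A, v⟩ hx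
      rw [Finset.mem_coe, hS₁, mem_sigma] at hx
      obtain ⟨hA, hvA⟩ := hx
      simp only [hIndDef, mem_filter] at hA
      obtain ⟨-, hAcard, hAind⟩ := hA
      rw [Finset.mem_coe, hS₂, mem_sigma]
      constructor
      · simp only [hIndDef, mem_filter]
        refine ⟨mem_univ _, ?_, ?_⟩
        · rw [card_erase_of_mem hvA, hAcard]; omega
        · intro a ha b hb
          exact hAind a (erase_subset _ _ ha) b (erase_subset _ _ hb)
      · rw [hEdef, mem_filter]
        refine ⟨mem_univ _, notMem_erase _ _, ?_⟩
        rw [insert_erase hvA]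
        exact hAind
    · rintro ⟨A, v⟩ hx ⟨B, w⟩ hy h
      rw [Finset.mem_coe, hS₁, mem_sigma] at hx hy
      have h1 : A.erase v = B.erase w :=
        congrArg (fun x : (_ : Finset V) × V => x.1) h
      have hvw : v = w := congrArg (fun x : (_ : Finset V) × V => x.2) h
      subst hvw
      have hvA : v ∈ A := hx.2
      have hvB : v ∈ B := hy.2
      have : A = B := by rw [← insert_erase hvA, ← insert_erase hvB, h1]
      subst this
      rfl
  -- compute the two sides
  have hc1 : S₁.card = (Ind (j+1)).card * (j+1) := by
    rw [hS₁, Finset.card_sigma]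
    rw [Finset.sum_congr rfl (fun A hA => ?_), Finset.sum_const, smul_eq_mul]
    simp only [hIndDef, mem_filter] at hA
    exact hA.2.1
  have hc2 : S₂.card ≤ (Ind j).card * (j+1) := by
    rw [hS₂, Finset.card_sigma]
    calc ∑ B ∈ Ind j, (E B).card ≤ ∑ _B ∈ Ind j, (j+1) :=
          Finset.sum_le_sum (fun B hB => hE B hB)
      _ = (Ind j).card * (j+1) := by rw [Finset.sum_const, smul_eq_mul]
  rw [hcount, hcount]
  have : (Ind (j+1)).card * (j+1) ≤ (Ind j).card * (j+1) := by
    rw [← hc1]; exact hinj.trans hc2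
  exact Nat.le_of_mul_le_mul_right this (Nat.succ_pos j)
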